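/- If O = (0,0,0), P = (x,y,z), Q = (u,v,w) are vertices of an equilateral triangle with integer coordinates and side length l, then l² is an even integer; specifically xu + yv + zw = l²/2 is an integer. -/
import Mathlib

/-- If `O`, `P=(x,y,z)`, `Q=(u,v,w)` form an equilateral triangle in `ℤ³`
with side length `l`, then `l²` is even; specifically `x*u+y*v+z*w = l²/2`. -/
theorem side_sq_even (x y z u v w : ℤ) (l : ℝ)
    (h1 : l ^ 2 = ((x ^ 2 + y ^ 2 + z ^ 2 : ℤ) : ℝ))
    (h2 : l ^ 2 = ((u ^ 2 + v ^ 2 + w ^ 2 : ℤ) : ℝ))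
    (h3 : l ^ 2 = (((x - u) ^ 2 + (y - v) ^ 2 + (z - w) ^ 2 : ℤ) : ℝ)) :
    l ^ 2 = 2 * ((x * u + y * v + z * w : ℤ) : ℝ) := by
  push_cast at *
  nlinarith [h1, h2, h3]
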